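/- For a ∈ (0,1) and the map φ from the previous statement, every z ∈ S^(2n−1) with z ≠ P = (−1,0,…,0) satisfies φⁿ(z) → Q = (1,0,…,0) as n → ∞. -/

import Mathlib

open Filter Topology

noncomputable def Dden {n : ℕ} (a : ℝ) (z : EuclideanSpace ℂ (Fin (n + 1))) : ℂ :=
  (1 - (a : ℂ) ^ 2) * z 0 + (1 + (a : ℂ) ^ 2)

noncomputable def phiMap {n : ℕ} (a : ℝ) (z : EuclideanSpace ℂ (Fin (n + 1))) :
    EuclideanSpace ℂ (Fin (n + 1)) :=
  WithLp.toLp 2 (fun i =>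
    if i = 0 then ((1 + (a : ℂ) ^ 2) * z 0 + (1 - (a : ℂ) ^ 2)) / Dden a z
    else (2 * a * z i) / Dden a z)

noncomputable def Ppt (n : ℕ) : EuclideanSpace ℂ (Fin (n + 1)) :=
  WithLp.toLp 2 (fun i => if i = 0 then -1 else 0)

noncomputable def Qpt (n : ℕ) : EuclideanSpace ℂ (Fin (n + 1)) :=
  WithLp.toLp 2 (fun i => if i = 0 then 1 else 0)

lemma normSq_affine (A B : ℝ) (w : ℂ) :
    Complex.normSq ((A:ℂ) * w + B) = A^2 * Complex.normSq w + 2*A*B*w.re + B^2 := by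
  simp [Complex.normSq_apply, Complex.add_re, Complex.add_im, Complex.mul_re, Complex.mul_im]
  ring

lemma key_normSq (a : ℝ) (w : ℂ) :
    Complex.normSq ((1 + (a:ℂ)^2) * w + (1 - (a:ℂ)^2)) + 4*a^2*(1 - Complex.normSq w)
      = Complex.normSq ((1 - (a:ℂ)^2) * w + (1 + (a:ℂ)^2)) := by
  have h1 : (1 + (a:ℂ)^2) = (((1 + a^2 : ℝ)) : ℂ) := by push_cast; ring
  have h2 : (1 - (a:ℂ)^2) = (((1 - a^2 : ℝ)) : ℂ) := by push_cast; ring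
  rw [h1, h2, normSq_affine, normSq_affine]
  ring

lemma pos_re_ne_zero {c : ℂ} (h : 0 < c.re) : c ≠ 0 := by
  intro h0; rw [h0] at h; simp at h

lemma step_lemma {n : ℕ} {a : ℝ} (ha : a ∈ Set.Ioo (0:ℝ) 1)
    {w : EuclideanSpace ℂ (Fin (n+1))} {s : ℂ} (hs : 0 ≤ s.re)
    (hN : ∑ i, Complex.normSq (w i) = 1)
    (h0 : w 0 = (1 - s)/(1 + s)) :
    (∑ i, Complex.normSq (phiMap a w i) = 1) ∧
      phiMap a w 0 = (1 - (a:ℂ)^2 * s)/(1 + (a:ℂ)^2 * s) := by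
  obtain ⟨ha0, ha1⟩ := ha
  have ha2 : (0:ℝ) ≤ a^2 := sq_nonneg a
  have h1s : (1 + s) ≠ 0 := by
    apply pos_re_ne_zero; simp; linarith
  have hc : ((a:ℂ))^2 = ((a^2 : ℝ) : ℂ) := by push_cast; ring
  have hare : ((a:ℂ)^2).re = a^2 := by rw [hc]; exact Complex.ofReal_re _
  have haim : ((a:ℂ)^2).im = 0 := by rw [hc]; exact Complex.ofReal_im _
  have hre : ((a:ℂ)^2 * s).re = a^2 * s.re := by
    simp only [Complex.mul_re, hare, haim]; ring
  have h1as : (1 + (a:ℂ)^2 * s) ≠ 0 := by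
    apply pos_re_ne_zero; simp [hre]; nlinarith
  have hD : Dden a w = (2 + 2*(a:ℂ)^2*s)/(1+s) := by
    rw [Dden, h0]; field_simp; ring
  have hnum : (2 + 2*(a:ℂ)^2*s) ≠ 0 := by
    apply pos_re_ne_zero
    have : (2 + 2*(a:ℂ)^2*s) = 2 + (a:ℂ)^2 * (2*s) := by ring
    rw [this]
    simp only [Complex.add_re, Complex.mul_re, hare, haim]
    norm_num; nlinarith
  have hD0 : Dden a w ≠ 0 := by rw [hD]; exact div_ne_zero hnum h1s
  constructor
  · -- norm preservation
    have htail : ∑ i : Fin n, Complex.normSq (w i.succ) = 1 - Complex.normSq (w 0) := by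
      rw [Fin.sum_univ_succ] at hN; linarith
    rw [Fin.sum_univ_succ]
    have hphi0 : phiMap a w 0 = ((1 + (a:ℂ)^2) * w 0 + (1 - (a:ℂ)^2)) / Dden a w := by
      simp [phiMap]
    have hphii : ∀ i : Fin n, phiMap a w i.succ = (2 * a * w i.succ) / Dden a w := by
      intro i; simp [phiMap, Fin.succ_ne_zero]
    rw [hphi0]
    simp only [hphii, Complex.normSq_div, Complex.normSq_mul]
    rw [← Finset.sum_div, ← Finset.mul_sum, htail]
    rw [← add_div, div_eq_one_iff_eq (by simpa using hD0)]
    have h2a : Complex.normSq 2 * Complex.normSq (a:ℂ) = 4 * a^2 := by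
      simp [Complex.normSq_ofReal]; ring
    rw [h2a, Dden, ← key_normSq a (w 0)]
  · -- first coordinate
    have hphi0 : phiMap a w 0 = ((1 + (a:ℂ)^2) * w 0 + (1 - (a:ℂ)^2)) / Dden a w := by
      simp [phiMap]
    rw [hphi0, hD, h0]
    rw [div_eq_div_iff (by exact div_ne_zero hnum h1s) h1as]
    field_simp
    ring

lemma norm_sq_complex (c : ℂ) : ‖c‖^2 = Complex.normSq c := by
  rw [Complex.sq_norm]

/-- For `a ∈ (0,1)`, every point of the unit sphere other than
`P = (-1,0,…,0)` converges to `Q = (1,0,…,0)` under iteration of `φ`. -/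
theorem stmt_17 {n : ℕ} (a : ℝ) (ha : a ∈ Set.Ioo (0 : ℝ) 1)
    (z : EuclideanSpace ℂ (Fin (n + 1))) (hz : ‖z‖ = 1) (hzP : z ≠ Ppt n) :
    Tendsto (fun k => (phiMap a)^[k] z) atTop (𝓝 (Qpt n)) := by
  obtain ⟨ha0, ha1⟩ := ha
  have hNz : ∑ i, Complex.normSq (z i) = 1 := by
    have h := hz
    rw [EuclideanSpace.norm_eq] at h
    have h2 : ∑ i, ‖z i‖^2 = 1 := by
      have hnn : 0 ≤ ∑ i, ‖z i‖^2 :=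
        Finset.sum_nonneg fun i _ => sq_nonneg _
      nlinarith [Real.sq_sqrt hnn, h]
    simpa [Complex.sq_norm] using h2
  have hz0ne : z 0 ≠ -1 := by
    intro h0
    apply hzP
    have hsq : Complex.normSq (z 0) = 1 := by rw [h0]; simp
    have htail : ∑ i : Fin n, Complex.normSq (z i.succ) = 0 := by
      rw [Fin.sum_univ_succ] at hNz; linarith
    have hzero : ∀ i : Fin n, z i.succ = 0 := by
      intro i
      have := (Finset.sum_eq_zero_iff_of_nonneg
        (fun j _ => Complex.normSq_nonneg (z j.succ))).mp htail i (Finset.mem_univ i)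
      exact Complex.normSq_eq_zero.mp this
    ext i
    refine Fin.cases ?_ ?_ i
    · simpa [Ppt] using h0
    · intro j; simpa [Ppt, Fin.succ_ne_zero] using hzero j
  have h1z : (1 + z 0) ≠ 0 := by
    intro h; exact hz0ne (by linear_combination h)
  set u : ℂ := (1 - z 0)/(1 + z 0) with hu_def
  have hle : Complex.normSq (z 0) ≤ 1 := by
    have := Finset.single_le_sum (f := fun i => Complex.normSq (z i))
      (fun i _ => Complex.normSq_nonneg _) (Finset.mem_univ 0)
    rw [hNz] at this; exact this
  have hnumeq : (1 - z 0).re*(1 + z 0).re + (1 - z 0).im*(1 + z 0).im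
      = 1 - Complex.normSq (z 0) := by
    simp [Complex.normSq_apply, Complex.sub_re, Complex.add_re, Complex.sub_im,
      Complex.add_im]
    ring
  have hure : 0 ≤ u.re := by
    rw [hu_def, Complex.div_re, ← add_div, hnumeq]
    exact div_nonneg (by linarith) (Complex.normSq_nonneg _)
  have h1u : (1 + u) ≠ 0 := by
    apply pos_re_ne_zero; simp [Complex.add_re]; linarith
  have hz00 : z 0 = (1 - u)/(1 + u) := by
    rw [eq_div_iff h1u, hu_def]
    field_simp
    ring
  have hcast : ∀ k : ℕ, ((a:ℂ)^2)^k = (((a^2)^k : ℝ) : ℂ) := by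
    intro k; push_cast; ring
  have hsre : ∀ k : ℕ, 0 ≤ (((a:ℂ)^2)^k * u).re := by
    intro k
    rw [hcast]
    simp only [Complex.mul_re, Complex.ofReal_re, Complex.ofReal_im]
    have : (0:ℝ) ≤ (a^2)^k := pow_nonneg (sq_nonneg a) k
    nlinarith
  have main : ∀ k, (∑ i, Complex.normSq ((phiMap a)^[k] z i) = 1) ∧
      (phiMap a)^[k] z 0 = (1 - ((a:ℂ)^2)^k * u)/(1 + ((a:ℂ)^2)^k * u) := by
    intro k
    induction k with
    | zero => simpa using ⟨hNz, hz00⟩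
    | succ k ih =>
      rw [Function.iterate_succ_apply']
      obtain ⟨h1, h2⟩ := step_lemma ⟨ha0, ha1⟩ (hsre k) ih.1 ih.2
      refine ⟨h1, ?_⟩
      rw [h2]
      congr 1 <;> · congr 1; ring
  -- limit of s_k
  have hpow : Tendsto (fun k => ((a:ℂ)^2)^k) atTop (𝓝 0) := by
    apply tendsto_pow_atTop_nhds_zero_of_norm_lt_one
    rw [norm_pow, Complex.norm_real]
    rw [Real.norm_eq_abs, abs_of_pos ha0]; nlinarith
  have hs0 : Tendsto (fun k => ((a:ℂ)^2)^k * u) atTop (𝓝 0) := by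
    simpa using hpow.mul_const u
  have h0lim : Tendsto (fun k => (phiMap a)^[k] z 0) atTop (𝓝 1) := by
    have : Tendsto (fun k => (1 - ((a:ℂ)^2)^k * u)/(1 + ((a:ℂ)^2)^k * u)) atTop
        (𝓝 ((1 - 0)/(1 + 0))) :=
      (tendsto_const_nhds.sub hs0).div (tendsto_const_nhds.add hs0) (by norm_num)
    simp only [sub_zero, add_zero, div_one] at this
    exact this.congr fun k => ((main k).2).symm
  have hre1 : Tendsto (fun k => ((phiMap a)^[k] z 0).re) atTop (𝓝 1) := by
    have := (Complex.continuous_re.tendsto 1).comp h0lim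
    exact this
  have hnorm : ∀ k, ‖(phiMap a)^[k] z - Qpt n‖
      = Real.sqrt (2 - 2*((phiMap a)^[k] z 0).re) := by
    intro k
    rw [EuclideanSpace.norm_eq]
    congr 1
    have hsum := (main k).1
    set w := (phiMap a)^[k] z with hw
    rw [Fin.sum_univ_succ] at hsum ⊢
    have hQ0 : Qpt n 0 = 1 := by simp [Qpt]
    have hQs : ∀ i : Fin n, Qpt n i.succ = 0 := by
      intro i; simp [Qpt, Fin.succ_ne_zero]
    have happ : ∀ i, (w - Qpt n) i = w i - Qpt n i := fun i => rfl
    simp only [happ, hQ0, hQs, sub_zero, norm_sq_complex]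
    have hns : Complex.normSq (w 0 - 1)
        = Complex.normSq (w 0) - 2*(w 0).re + 1 := by
      simp [Complex.normSq_apply, Complex.sub_re, Complex.sub_im]
      ring
    rw [hns]
    linarith
  rw [tendsto_iff_norm_sub_tendsto_zero]
  have h20 : Tendsto (fun k => 2 - 2*((phiMap a)^[k] z 0).re) atTop (𝓝 0) := by
    have h := Tendsto.sub (tendsto_const_nhds (x := (2:ℝ)) (f := (atTop : Filter ℕ)))
      (hre1.const_mul 2)
    simpa using h
  have := (Real.continuous_sqrt.tendsto 0).comp h20
  simp only [Function.comp, Real.sqrt_zero] at this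
  exact Tendsto.congr (fun k => (hnorm k).symm) this
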